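/- Let k be a natural number and let Γ be a singly connected, row-finite, source-free k-graph, with the partial order ≤ on objects given by u ≤ w if and only if there is a morphism w ⟶ u. Then the orbit space Γ^∞/≃ (the quotient of the infinite path space by shift equivalence, with the quotient topology) is Hausdorff if and only if for every pair U ≠ V of ultrafilters of (Γ⁰, ≤) there exist u ∈ U and v ∈ V with no common upper bound with respect to ≤ (there is no object w with u ≤ w and v ≤ w). -/

import Mathlib

open CategoryTheory

/-- A `k`-graph structure on a small category `Γ`. -/
structure KGraph (k : ℕ) (Λ : Type) [SmallCategory Λ] where
  d : ∀ {X Y : Λ}, (X ⟶ Y) → (Fin k → ℕ)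
  d_id : ∀ X : Λ, d (𝟙 X) = 0
  d_comp : ∀ {X Y Z : Λ} (f : X ⟶ Y) (g : Y ⟶ Z), d (f ≫ g) = d f + d g
  factorisation : ∀ {X Z : Λ} (f : X ⟶ Z) (m n : Fin k → ℕ), d f = m + n →
    ∃! t : Σ Y : Λ, (X ⟶ Y) × (Y ⟶ Z),
      d t.2.1 = m ∧ d t.2.2 = n ∧ t.2.1 ≫ t.2.2 = f

/-- `Γ` is row-finite and source-free. -/
def RowFiniteSourceFree {k : ℕ} {Γ : Type} [SmallCategory Γ] (S : KGraph k Γ) : Prop :=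
  ∀ (v : Γ) (n : Fin k → ℕ),
    {t : Σ u : Γ, u ⟶ v | S.d t.2 = n}.Finite ∧ {t : Σ u : Γ, u ⟶ v | S.d t.2 = n}.Nonempty

/-- An infinite path in a `k`-graph `Γ`: a (degree-preserving) functor from the opposite
of the poset category `(Fin k → ℕ, ≤)` to `Γ`, given concretely by its action `vertex`
on objects and `edge` on morphisms. -/
structure InfPath {k : ℕ} {Γ : Type} [SmallCategory Γ] (S : KGraph k Γ) where
  vertex : (Fin k → ℕ) → Γ
  edge : ∀ m n : Fin k → ℕ, m ≤ n → (vertex n ⟶ vertex m)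
  edge_refl : ∀ n, edge n n le_rfl = 𝟙 (vertex n)
  edge_comp : ∀ (m n p : Fin k → ℕ) (h₁ : m ≤ n) (h₂ : n ≤ p),
    edge m p (h₁.trans h₂) = edge n p h₂ ≫ edge m n h₁
  deg : ∀ (m n : Fin k → ℕ) (h : m ≤ n), S.d (edge m n h) = n - m

namespace InfPath

variable {k : ℕ} {Γ : Type} [SmallCategory Γ] {S : KGraph k Γ}

/-- The shift `σ^p x` of an infinite path `x`. -/
def shift (p : Fin k → ℕ) (x : InfPath S) : InfPath S where
  vertex n := x.vertex (n + p)
  edge m n h := x.edge (m + p) (n + p) (add_le_add h le_rfl)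
  edge_refl n := x.edge_refl (n + p)
  edge_comp m n q h₁ h₂ := x.edge_comp (m + p) (n + p) (q + p) _ _
  deg m n h := by
    rw [x.deg]
    funext i
    simp [Nat.add_sub_add_right]

/-- Shift equivalence of infinite paths. -/
def ShiftEquiv (x y : InfPath S) : Prop := ∃ p q, shift p x = shift q y

/-- The cylinder set of a morphism `lam : X ⟶ Y`: infinite paths whose initial segment
of degree `d lam` is `lam`. -/
def cyl {X Y : Γ} (lam : X ⟶ Y) : Set (InfPath S) :=
  {x | ∃ (h₁ : x.vertex (S.d lam) = X) (h₀ : x.vertex 0 = Y),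
    x.edge 0 (S.d lam) zero_le = eqToHom h₁ ≫ lam ≫ eqToHom h₀.symm}

/-- The topology on the infinite path space, generated by the cylinder sets. -/
def pathTopology (S : KGraph k Γ) : TopologicalSpace (InfPath S) :=
  TopologicalSpace.generateFrom {U | ∃ (X Y : Γ) (lam : X ⟶ Y), U = cyl lam}

/-- The quotient topology on the orbit space `Γ^∞/≃` of the infinite path space by
shift equivalence. -/
def orbitTopology (S : KGraph k Γ) :
    TopologicalSpace (Quot (ShiftEquiv (S := S))) :=
  (pathTopology S).coinduced (Quot.mk _)

end InfPath

open InfPath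


open InfPath

/-- The order on vertices: `u ≤ w` iff there is a morphism `w ⟶ u` (i.e. `uΓw ≠ ∅`). -/
def vle {Γ : Type} [SmallCategory Γ] (u w : Γ) : Prop := Nonempty (w ⟶ u)

/-- A filter for `(Γ⁰, ≤)`: a nonempty, upward-directed, downward-closed set of
vertices. -/
def IsVertexFilter {Γ : Type} [SmallCategory Γ] (F : Set Γ) : Prop :=
  F.Nonempty ∧
  (∀ u ∈ F, ∀ v ∈ F, ∃ w ∈ F, vle u w ∧ vle v w) ∧
  (∀ v ∈ F, ∀ u, vle u v → u ∈ F)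

/-- An ultrafilter for `(Γ⁰, ≤)`: a filter maximal under inclusion among filters. -/
def IsVertexUltrafilter {Γ : Type} [SmallCategory Γ] (F : Set Γ) : Prop :=
  IsVertexFilter F ∧ ∀ F' : Set Γ, IsVertexFilter F' → F ⊆ F' → F' = F

namespace KGraphAux

open InfPath

variable {k : ℕ} {Γ : Type} [SmallCategory Γ] {S : KGraph k Γ}

lemma d_eqToHom {X Y : Γ} (h : X = Y) : S.d (eqToHom h) = 0 := by
  subst h; simpa using S.d_id X

lemma hom_eq (hsc : ∀ X Y : Γ, Subsingleton (X ⟶ Y)) {X Y : Γ} (f g : X ⟶ Y) : f = g :=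
  (hsc X Y).allEq f g

noncomputable def fac {X Z : Γ} (f : X ⟶ Z) {n : Fin k → ℕ} (hn : n ≤ S.d f) :
    Σ Y : Γ, (X ⟶ Y) × (Y ⟶ Z) :=
  (S.factorisation f (S.d f - n) n (tsub_add_cancel_of_le hn).symm).exists.choose

noncomputable def mid {X Z : Γ} (f : X ⟶ Z) {n : Fin k → ℕ} (hn : n ≤ S.d f) : Γ :=
  (fac f hn).1

noncomputable def lpart {X Z : Γ} (f : X ⟶ Z) {n : Fin k → ℕ} (hn : n ≤ S.d f) :
    X ⟶ mid f hn := (fac f hn).2.1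

noncomputable def rpart {X Z : Γ} (f : X ⟶ Z) {n : Fin k → ℕ} (hn : n ≤ S.d f) :
    mid f hn ⟶ Z := (fac f hn).2.2

lemma fac_spec {X Z : Γ} (f : X ⟶ Z) {n : Fin k → ℕ} (hn : n ≤ S.d f) :
    S.d (lpart f hn) = S.d f - n ∧ S.d (rpart f hn) = n ∧ lpart f hn ≫ rpart f hn = f :=
  (S.factorisation f (S.d f - n) n (tsub_add_cancel_of_le hn).symm).exists.choose_spec

lemma d_lpart {X Z : Γ} (f : X ⟶ Z) {n : Fin k → ℕ} (hn : n ≤ S.d f) :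
    S.d (lpart f hn) = S.d f - n := (fac_spec f hn).1

lemma d_rpart {X Z : Γ} (f : X ⟶ Z) {n : Fin k → ℕ} (hn : n ≤ S.d f) :
    S.d (rpart f hn) = n := (fac_spec f hn).2.1

lemma lpart_rpart {X Z : Γ} (f : X ⟶ Z) {n : Fin k → ℕ} (hn : n ≤ S.d f) :
    lpart f hn ≫ rpart f hn = f := (fac_spec f hn).2.2

lemma mid_eq {X Z : Γ} (f : X ⟶ Z) {n : Fin k → ℕ} (hn : n ≤ S.d f) {Y : Γ}
    (g : X ⟶ Y) (h : Y ⟶ Z) (hd : S.d h = n) (hc : g ≫ h = f) : Y = mid f hn := by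
  obtain ⟨t, -, hu⟩ := S.factorisation f (S.d f - n) n (tsub_add_cancel_of_le hn).symm
  have hdg : S.d g = S.d f - n := by
    have h2 : S.d g + n = S.d f := by rw [← hc, S.d_comp, hd]
    funext i
    exact Nat.eq_sub_of_add_eq (congrFun h2 i)
  have h1 : (⟨Y, g, h⟩ : Σ Y : Γ, (X ⟶ Y) × (Y ⟶ Z)) = t := hu _ ⟨hdg, hd, hc⟩
  have h2 : fac f hn = t := hu _ (fac_spec f hn)
  exact congrArg Sigma.fst (h1.trans h2.symm)

lemma mid_mid {X Z : Γ} (f : X ⟶ Z) {m n : Fin k → ℕ} (hmn : m ≤ n) (hn : n ≤ S.d f) :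
    ∃ e : mid f hn ⟶ mid f (hmn.trans hn), S.d e = n - m := by
  have hm' : m ≤ S.d (rpart f hn) := by rw [d_rpart]; exact hmn
  have key : mid (rpart f hn) hm' = mid f (hmn.trans hn) :=
    mid_eq f (hmn.trans hn) (lpart f hn ≫ lpart (rpart f hn) hm') (rpart (rpart f hn) hm')
      (d_rpart _ _) (by rw [Category.assoc, lpart_rpart, lpart_rpart])
  refine ⟨lpart (rpart f hn) hm' ≫ eqToHom key, ?_⟩
  rw [S.d_comp, d_eqToHom, add_zero, d_lpart, d_rpart]

lemma mid_comp {X Y Z : Γ} {g : X ⟶ Z} {a : X ⟶ Y} {b : Y ⟶ Z} (hab : g = a ≫ b)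
    {n : Fin k → ℕ} (hnb : n ≤ S.d b) (hng : n ≤ S.d g) : mid g hng = mid b hnb :=
  (mid_eq g hng (a ≫ lpart b hnb) (rpart b hnb) (d_rpart _ _)
    (by rw [Category.assoc, lpart_rpart, ← hab])).symm

lemma mid_zero {X Z : Γ} (f : X ⟶ Z) (h0 : (0 : Fin k → ℕ) ≤ S.d f) : mid f h0 = Z :=
  (mid_eq f h0 f (𝟙 Z) (S.d_id Z) (Category.comp_id f)).symm

lemma mid_top {X Z : Γ} (f : X ⟶ Z) {n : Fin k → ℕ} (hn : n ≤ S.d f) (hdn : S.d f = n) :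
    mid f hn = X :=
  (mid_eq f hn (𝟙 X) f hdn (Category.id_comp f)).symm


section Paths

lemma d_edge0 (x : InfPath S) (N : Fin k → ℕ) : S.d (x.edge 0 N zero_le) = N := by
  rw [x.deg]; simp

lemma vertex_eq_mid (x : InfPath S) {n N : Fin k → ℕ} (hnN : n ≤ N)
    (hn : n ≤ S.d (x.edge 0 N zero_le)) :
    x.vertex n = mid (x.edge 0 N zero_le) hn :=
  mid_eq _ hn (x.edge n N hnN) (x.edge 0 n zero_le)
    (by rw [x.deg]; simp) ((x.edge_comp 0 n N zero_le hnN).symm)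

lemma path_ext (hsc : ∀ X Y : Γ, Subsingleton (X ⟶ Y)) {x y : InfPath S} (h : x.vertex = y.vertex) : x = y := by
  cases x with
  | mk vx ex rx cx dx =>
    cases y with
    | mk vy ey ry cy dy =>
      dsimp at h
      subst h
      have : ex = ey := by
        funext m n hmn
        exact hom_eq hsc _ _
      subst this
      rfl

noncomputable def mkPath (hsc : ∀ X Y : Γ, Subsingleton (X ⟶ Y)) (v : (Fin k → ℕ) → Γ)
    (h : ∀ m n : Fin k → ℕ, m ≤ n → ∃ f : v n ⟶ v m, S.d f = n - m) : InfPath S where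
  vertex := v
  edge m n hmn := (h m n hmn).choose
  edge_refl n := hom_eq hsc _ _
  edge_comp m n p h1 h2 := hom_eq hsc _ _
  deg m n hmn := (h m n hmn).choose_spec

@[simp] lemma mkPath_vertex (hsc : ∀ X Y : Γ, Subsingleton (X ⟶ Y)) (v : (Fin k → ℕ) → Γ)
    (h : ∀ m n : Fin k → ℕ, m ≤ n → ∃ f : v n ⟶ v m, S.d f = n - m) (n : Fin k → ℕ) :
    (mkPath hsc v h).vertex n = v n := rfl

lemma shiftEquiv_equivalence (hsc : ∀ X Y : Γ, Subsingleton (X ⟶ Y)) : Equivalence (ShiftEquiv (S := S)) := by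
  constructor
  · exact fun x => ⟨0, 0, rfl⟩
  · rintro x y ⟨p, q, h⟩; exact ⟨q, p, h.symm⟩
  · rintro x y z ⟨p, q, h⟩ ⟨p', q', h'⟩
    refine ⟨p + p', q' + q, path_ext hsc (funext fun n => ?_)⟩
    have e1 : x.vertex ((n + p') + p) = y.vertex ((n + p') + q) :=
      congrArg (fun w => w.vertex (n + p')) h
    have e2 : y.vertex ((n + q) + p') = z.vertex ((n + q) + q') :=
      congrArg (fun w => w.vertex (n + q)) h'
    show x.vertex (n + (p + p')) = z.vertex (n + (q' + q))
    calc x.vertex (n + (p + p')) = x.vertex ((n + p') + p) := by rw [add_comm p p', ← add_assoc]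
    _ = y.vertex ((n + p') + q) := e1
    _ = y.vertex ((n + q) + p') := by rw [add_right_comm]
    _ = z.vertex ((n + q) + q') := e2
    _ = z.vertex (n + (q' + q)) := by rw [add_comm q' q, ← add_assoc]

end Paths

section VF

/-- The filter of vertices lying below (some vertex of) the path `x`. -/
def VF (x : InfPath S) : Set Γ := {u | ∃ n : Fin k → ℕ, Nonempty (x.vertex n ⟶ u)}

lemma vertex_mem_VF (x : InfPath S) (n : Fin k → ℕ) : x.vertex n ∈ VF x := ⟨n, ⟨𝟙 _⟩⟩

lemma VF_filter (x : InfPath S) : IsVertexFilter (VF x) := by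
  refine ⟨⟨x.vertex 0, vertex_mem_VF x 0⟩, ?_, ?_⟩
  · rintro u ⟨m, ⟨f⟩⟩ v ⟨n, ⟨g⟩⟩
    refine ⟨x.vertex (m ⊔ n), vertex_mem_VF _ _, ⟨x.edge m (m ⊔ n) le_sup_left ≫ f⟩,
      ⟨x.edge n (m ⊔ n) le_sup_right ≫ g⟩⟩
  · rintro v ⟨n, ⟨f⟩⟩ u ⟨g⟩
    exact ⟨n, ⟨f ≫ g⟩⟩

lemma VF_shift (p : Fin k → ℕ) (x : InfPath S) : VF (shift p x) = VF x := by
  ext u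
  constructor
  · rintro ⟨n, ⟨f⟩⟩; exact ⟨n + p, ⟨f⟩⟩
  · rintro ⟨n, ⟨f⟩⟩
    exact ⟨n, ⟨(show (shift p x).vertex n ⟶ x.vertex n from x.edge n (n + p) le_self_add) ≫ f⟩⟩

lemma VF_eq_of_shiftEquiv {x y : InfPath S} (h : ShiftEquiv x y) : VF x = VF y := by
  obtain ⟨p, q, h⟩ := h
  rw [← VF_shift p x, h, VF_shift]

end VF

section VF2

lemma vle_iff {u w : Γ} : vle u w ↔ Nonempty (w ⟶ u) := Iff.rfl

lemma shiftEquiv_of_VF_eq (hsc : ∀ X Y : Γ, Subsingleton (X ⟶ Y)) {x y : InfPath S}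
    (h : VF x = VF y) : ShiftEquiv x y := by
  obtain ⟨a, ⟨f⟩⟩ : y.vertex 0 ∈ VF x := h ▸ vertex_mem_VF y 0
  refine ⟨a, S.d f, path_ext hsc (funext fun n => ?_)⟩
  show x.vertex (n + a) = y.vertex (n + S.d f)
  obtain ⟨b, ⟨g⟩⟩ : x.vertex (n + a) ∈ VF y := h ▸ vertex_mem_VF x (n + a)
  have hchi : g ≫ x.edge a (n + a) le_add_self ≫ f = y.edge 0 b zero_le := hom_eq hsc _ _
  have hdb : S.d (y.edge 0 b zero_le) = b := d_edge0 y b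
  have hd2 : S.d g + (n + S.d f) = b := by
    have h3 := congrArg S.d hchi
    rw [S.d_comp, S.d_comp, x.deg, hdb, add_tsub_cancel_right] at h3
    exact h3
  have hnr : n + S.d f ≤ S.d (y.edge 0 b zero_le) := by
    rw [hdb, ← hd2]; exact le_add_self
  have e1 : x.vertex (n + a) = mid (y.edge 0 b zero_le) hnr :=
    mid_eq _ hnr g (x.edge a (n + a) le_add_self ≫ f)
      (by rw [S.d_comp, x.deg, add_tsub_cancel_right]) hchi
  have e2 : y.vertex (n + S.d f) = mid (y.edge 0 b zero_le) hnr :=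
    vertex_eq_mid y (by rw [← hd2]; exact le_add_self) hnr
  exact e1.trans e2.symm

lemma VF_ultra (hsc : ∀ X Y : Γ, Subsingleton (X ⟶ Y)) (x : InfPath S) :
    IsVertexUltrafilter (VF x) := by
  refine ⟨VF_filter x, fun F' hF' hsub => Set.Subset.antisymm (fun w hw => ?_) hsub⟩
  obtain ⟨z, hzF, hv1, hv2⟩ := hF'.2.1 w hw (x.vertex 0) (hsub (vertex_mem_VF x 0))
  obtain ⟨f1⟩ := (hv1 : Nonempty (z ⟶ w))
  obtain ⟨f2⟩ := (hv2 : Nonempty (z ⟶ x.vertex 0))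
  obtain ⟨t, htF, hv3, hv4⟩ := hF'.2.1 z hzF (x.vertex (S.d f2)) (hsub (vertex_mem_VF x (S.d f2)))
  obtain ⟨al⟩ := (hv3 : Nonempty (t ⟶ z))
  obtain ⟨be⟩ := (hv4 : Nonempty (t ⟶ x.vertex (S.d f2)))
  have hchi : al ≫ f2 = be ≫ x.edge 0 (S.d f2) zero_le := hom_eq hsc _ _
  have hrd : S.d f2 ≤ S.d (al ≫ f2) := by rw [S.d_comp]; exact le_add_self
  have e1 : z = mid (al ≫ f2) hrd := mid_eq _ hrd al f2 rfl rfl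
  have e2 : x.vertex (S.d f2) = mid (al ≫ f2) hrd :=
    mid_eq _ hrd be (x.edge 0 (S.d f2) zero_le) (d_edge0 x _) hchi.symm
  exact ⟨S.d f2, ⟨eqToHom (e2.trans e1.symm) ≫ f1⟩⟩

end VF2

section Koenig

lemma nat_koenig {X : ℕ → Type} [∀ j, Finite (X j)] [∀ j, Nonempty (X j)]
    (T : ∀ j, X (j + 1) → X j) :
    ∃ w : ∀ j, X j, ∀ j, T j (w (j + 1)) = w j := by
  let F : ℕᵒᵖ ⥤ Type := Functor.ofOpSequence (X := X) (fun n => TypeCat.ofHom (T n))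
  haveI : ∀ j : ℕᵒᵖ, Finite (F.obj j) := fun j => by
    show Finite (X j.unop); infer_instance
  haveI : ∀ j : ℕᵒᵖ, Nonempty (F.obj j) := fun j => by
    show Nonempty (X j.unop); infer_instance
  obtain ⟨s, hs⟩ := nonempty_sections_of_finite_inverse_system F
  refine ⟨fun j => s (Opposite.op j), fun j => ?_⟩
  have h2 := hs (f := (homOfLE (Nat.le_add_right j 1)).op)
  rw [Functor.ofOpSequence_map_homOfLE_succ] at h2
  exact h2

lemma chainPath (hsc : ∀ X Y : Γ, Subsingleton (X ⟶ Y)) (hrf : RowFiniteSourceFree S)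
    (v : ℕ → Γ) (hv : ∀ j, Nonempty (v (j + 1) ⟶ v j)) :
    ∃ x : InfPath S, x.vertex 0 = v 0 ∧ ∀ j, ∃ n : Fin k → ℕ, Nonempty (x.vertex n ⟶ v j) := by
  classical
  let g : ∀ j, v j ⟶ v 0 := fun j => Nat.rec (𝟙 (v 0)) (fun j gj => (hv j).some ≫ gj) j
  have hg : ∀ j, g (j + 1) = (hv j).some ≫ g j := fun j => rfl
  let s : ℕ → Fin k → ℕ := fun j => S.d (g j)
  have hs_mono : Monotone s := monotone_nat_of_le_succ (fun j => by
    show s j ≤ S.d (g (j + 1))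
    rw [hg, S.d_comp]
    exact le_add_self)
  let c : ℕ → Fin k → ℕ := fun j => s j + (fun _ => j)
  have hsc' : ∀ j, s j ≤ c j := fun j => le_self_add
  have hc_mono : Monotone c := fun a b hab => add_le_add (hs_mono hab) (fun i => hab)
  let P : ℕ → (Σ zz : Γ, zz ⟶ v 0) → Prop :=
    fun j t => S.d t.2 = c j ∧ Nonempty (t.1 ⟶ v j)
  let A : ℕ → Type := fun j => {t // P j t}
  haveI : ∀ j, Finite (A j) := by
    intro j
    have h2 : {t : Σ zz : Γ, zz ⟶ v 0 | P j t}.Finite :=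
      ((hrf (v 0) (c j)).1).subset (fun t ht => ht.1)
    exact h2.to_subtype
  haveI : ∀ j, Nonempty (A j) := by
    intro j
    obtain ⟨⟨zz, h⟩, hd⟩ := (hrf (v j) (c j - s j)).2
    refine ⟨⟨⟨zz, h ≫ g j⟩, ?_, ⟨h⟩⟩⟩
    show S.d (h ≫ g j) = c j
    rw [S.d_comp, hd]
    exact tsub_add_cancel_of_le (hsc' j)
  let T : ∀ j, A (j + 1) → A j := fun j t =>
    have hcj : c j ≤ S.d t.1.2 := by rw [t.2.1]; exact hc_mono (Nat.le_succ j)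
    have hsj : s j ≤ S.d t.1.2 := le_trans (hsc' j) hcj
    have hvj : v j = mid t.1.2 hsj :=
      mid_eq _ hsj (t.2.2.some ≫ (hv j).some) (g j) rfl (hom_eq hsc _ _)
    ⟨⟨mid t.1.2 hcj, rpart t.1.2 hcj⟩, d_rpart _ _,
      ⟨(mid_mid t.1.2 (hsc' j) hcj).choose ≫ eqToHom hvj.symm⟩⟩
  obtain ⟨w, hw⟩ := nat_koenig T
  let z : ℕ → Γ := fun j => (w j).1.1
  let f : ∀ j, z j ⟶ v 0 := fun j => (w j).1.2
  have hdf : ∀ j, S.d (f j) = c j := fun j => (w j).2.1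
  have hnv : ∀ j, Nonempty (z j ⟶ v j) := fun j => (w j).2.2
  have hstep : ∀ j, Nonempty (z (j + 1) ⟶ z j) := by
    intro j
    have hcj : c j ≤ S.d (f (j + 1)) := by rw [hdf]; exact hc_mono (Nat.le_succ j)
    have h1 : mid (f (j + 1)) hcj = z j := congrArg (fun t => t.1.1) (hw j)
    exact ⟨lpart (f (j + 1)) hcj ≫ eqToHom h1⟩
  have stable : ∀ (n : Fin k → ℕ) (j j' : ℕ), j ≤ j' → n ≤ c j →
      ∀ (h1 : n ≤ S.d (f j')) (h2 : n ≤ S.d (f j)), mid (f j') h1 = mid (f j) h2 := by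
    intro n j j' hjj'
    induction j', hjj' using Nat.le_induction with
    | base => intro _ h1 h2; rfl
    | succ j' hjj' ih =>
      intro hnj h1 h2
      have hx : n ≤ S.d (f j') := by rw [hdf]; exact le_trans hnj (hc_mono hjj')
      have hdec : f (j' + 1) = (hstep j').some ≫ f j' := hom_eq hsc _ _
      rw [mid_comp hdec hx h1]
      exact ih hnj hx h2
  let J : (Fin k → ℕ) → ℕ := fun n => Finset.univ.sup n
  have hJ : ∀ n, n ≤ c (J n) := by
    intro n i
    show n i ≤ s (J n) i + J n
    have : n i ≤ J n := Finset.le_sup (Finset.mem_univ i)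
    omega
  have hdJ : ∀ n, n ≤ S.d (f (J n)) := fun n => by rw [hdf]; exact hJ n
  let xv : (Fin k → ℕ) → Γ := fun n => mid (f (J n)) (hdJ n)
  have hxv : ∀ m n : Fin k → ℕ, m ≤ n → ∃ e : xv n ⟶ xv m, S.d e = n - m := by
    intro m n hmn
    have hnj : n ≤ S.d (f (max (J m) (J n))) := by
      rw [hdf]; exact le_trans (hJ n) (hc_mono (le_max_right _ _))
    have hmj : m ≤ S.d (f (max (J m) (J n))) := le_trans hmn hnj
    obtain ⟨e, he⟩ := mid_mid (f (max (J m) (J n))) hmn hnj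
    refine ⟨eqToHom (stable n (J n) _ (le_max_right _ _) (hJ n) hnj (hdJ n)).symm ≫ e
      ≫ eqToHom (stable m (J m) _ (le_max_left _ _) (hJ m) hmj (hdJ m)), ?_⟩
    rw [S.d_comp, S.d_comp, d_eqToHom, d_eqToHom, he]
    simp
  refine ⟨mkPath hsc xv hxv, mid_zero _ _, ?_⟩
  intro j
  refine ⟨c j, ?_⟩
  show Nonempty (xv (c j) ⟶ v j)
  have hcj : c j ≤ S.d (f j) := le_of_eq (hdf j).symm
  have hx2 : c j ≤ S.d (f (max (J (c j)) j)) := by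
    rw [hdf]; exact le_trans (hJ (c j)) (hc_mono (le_max_left _ _))
  have h1 : xv (c j) = mid (f j) hcj := by
    have e1 := stable (c j) (J (c j)) (max (J (c j)) j) (le_max_left _ _) (hJ (c j)) hx2 (hdJ (c j))
    have e2 := stable (c j) j (max (J (c j)) j) (le_max_right _ _) le_rfl hx2 hcj
    exact e1.symm.trans e2
  rw [h1, mid_top _ hcj (hdf j)]
  exact hnv j

lemma exists_path_of_ultra (hsc : ∀ X Y : Γ, Subsingleton (X ⟶ Y))
    (hrf : RowFiniteSourceFree S) {U : Set Γ} (hU : IsVertexUltrafilter U) :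
    ∃ x : InfPath S, VF x = U := by
  classical
  obtain ⟨hne, hdir, hdc⟩ := hU.1
  obtain ⟨u, hu⟩ := hne
  have ub : ∀ a ∈ U, ∀ b ∈ U, ∃ t, t ∈ U ∧ Nonempty (t ⟶ a) ∧ Nonempty (t ⟶ b) := by
    intro a ha b hb
    obtain ⟨t, ht, h1, h2⟩ := hdir a ha b hb
    exact ⟨t, ht, h1, h2⟩
  let Deg : Set (Fin k → ℕ) := {r | ∃ zz, zz ∈ U ∧ ∃ ff : zz ⟶ u, S.d ff = r}
  have hDegne : Deg.Nonempty := ⟨0, u, hu, 𝟙 u, S.d_id u⟩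
  obtain ⟨ρ, hρ⟩ := (Set.to_countable Deg).exists_eq_range hDegne
  have hmemD : ∀ j : ℕ, ρ j ∈ Deg := fun j => by rw [hρ]; exact Set.mem_range_self j
  let W : ℕ → Γ := fun j => (hmemD j).choose
  have hWU : ∀ j, W j ∈ U := fun j => (hmemD j).choose_spec.1
  let fW : ∀ j, W j ⟶ u := fun j => (hmemD j).choose_spec.2.choose
  have hfW : ∀ j, S.d (fW j) = ρ j := fun j => (hmemD j).choose_spec.2.choose_spec
  let V : ℕ → {a : Γ // a ∈ U} := fun j => Nat.rec ⟨u, hu⟩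
    (fun j vj => ⟨(ub vj.1 vj.2 (W j) (hWU j)).choose,
      (ub vj.1 vj.2 (W j) (hWU j)).choose_spec.1⟩) j
  let v : ℕ → Γ := fun j => (V j).1
  have hv1 : ∀ j, Nonempty (v (j + 1) ⟶ v j) := fun j =>
    (ub (V j).1 (V j).2 (W j) (hWU j)).choose_spec.2.1
  have hv2 : ∀ j, Nonempty (v (j + 1) ⟶ W j) := fun j =>
    (ub (V j).1 (V j).2 (W j) (hWU j)).choose_spec.2.2
  have hcof : ∀ a ∈ U, ∃ j, Nonempty (v j ⟶ a) := by
    intro a ha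
    obtain ⟨t, htU, h1, h2⟩ := ub a ha u hu
    obtain ⟨ta⟩ := h1
    obtain ⟨tu⟩ := h2
    have hmem : S.d tu ∈ Deg := ⟨t, htU, tu, rfl⟩
    rw [hρ] at hmem
    obtain ⟨j, hj⟩ := hmem
    obtain ⟨t', ht'U, h3, h4⟩ := ub t htU (W j) (hWU j)
    obtain ⟨al⟩ := h3
    obtain ⟨be⟩ := h4
    have hchi : al ≫ tu = be ≫ fW j := hom_eq hsc _ _
    have hrd : S.d tu ≤ S.d (al ≫ tu) := by rw [S.d_comp]; exact le_add_self
    have e1 : t = mid (al ≫ tu) hrd := mid_eq _ hrd al tu rfl rfl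
    have e2 : W j = mid (al ≫ tu) hrd := mid_eq _ hrd be (fW j) ((hfW j).trans hj) hchi.symm
    exact ⟨j + 1, ⟨(hv2 j).some ≫ eqToHom (e2.trans e1.symm) ≫ ta⟩⟩
  obtain ⟨x, hx0, hxj⟩ := chainPath hsc hrf v hv1
  have hUsub : U ⊆ VF x := by
    intro a ha
    obtain ⟨j, ⟨φ⟩⟩ := hcof a ha
    obtain ⟨n, ⟨ψ⟩⟩ := hxj j
    exact ⟨n, ⟨ψ ≫ φ⟩⟩
  exact ⟨x, hU.2 (VF x) (VF_filter x) hUsub⟩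

end Koenig

section Topology

lemma cyl_char (hsc : ∀ X Y : Γ, Subsingleton (X ⟶ Y)) {X Y : Γ} (lam : X ⟶ Y) :
    cyl (S := S) lam = {z : InfPath S | z.vertex 0 = Y ∧ z.vertex (S.d lam) = X} := by
  ext z
  constructor
  · rintro ⟨h1, h0, -⟩; exact ⟨h0, h1⟩
  · rintro ⟨h0, h1⟩
    exact ⟨h1, h0, hom_eq hsc _ _⟩

/-- The set of paths agreeing with `x` at degrees `0` and `N`. -/
def DSet (x : InfPath S) (N : Fin k → ℕ) : Set (InfPath S) :=
  {z | z.vertex 0 = x.vertex 0 ∧ z.vertex N = x.vertex N}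

lemma self_mem_DSet (x : InfPath S) (N : Fin k → ℕ) : x ∈ DSet x N := ⟨rfl, rfl⟩

lemma DSet_eq_cyl (hsc : ∀ X Y : Γ, Subsingleton (X ⟶ Y)) (x : InfPath S) (N : Fin k → ℕ) :
    DSet x N = cyl (x.edge 0 N zero_le) := by
  rw [cyl_char hsc, d_edge0]
  rfl

lemma DSet_agree (hsc : ∀ X Y : Γ, Subsingleton (X ⟶ Y)) {x z : InfPath S} {N : Fin k → ℕ}
    (hz : z ∈ DSet x N) {n : Fin k → ℕ} (hn : n ≤ N) : z.vertex n = x.vertex n := by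
  obtain ⟨h0, hN⟩ := hz
  have hdg : n ≤ S.d (z.edge 0 N zero_le ≫ eqToHom h0) := by
    rw [S.d_comp, d_eqToHom, add_zero, d_edge0]; exact hn
  have e1 : x.vertex n = mid _ hdg :=
    mid_eq _ hdg (eqToHom hN ≫ x.edge n N hn) (x.edge 0 n zero_le)
      (by rw [x.deg]; simp) (hom_eq hsc _ _)
  have e2 : z.vertex n = mid _ hdg :=
    mid_eq _ hdg (z.edge n N hn) (z.edge 0 n zero_le ≫ eqToHom h0)
      (by rw [S.d_comp, d_eqToHom, add_zero, z.deg]; simp) (hom_eq hsc _ _)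
  exact e2.trans e1.symm

lemma DSet_mono (hsc : ∀ X Y : Γ, Subsingleton (X ⟶ Y)) {x : InfPath S} {N N' : Fin k → ℕ}
    (hNN : N ≤ N') : DSet x N' ⊆ DSet x N :=
  fun _ hz => ⟨hz.1, DSet_agree hsc hz hNN⟩

lemma exists_DSet_subset (hsc : ∀ X Y : Γ, Subsingleton (X ⟶ Y)) {O : Set (InfPath S)}
    (hO : TopologicalSpace.GenerateOpen
      {U : Set (InfPath S) | ∃ (X Y : Γ) (lam : X ⟶ Y), U = cyl lam} O) :
    ∀ x ∈ O, ∃ N, DSet x N ⊆ O := by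
  induction hO with
  | basic U hU =>
    obtain ⟨X, Y, lam, rfl⟩ := hU
    intro x hx
    rw [cyl_char hsc] at hx
    refine ⟨S.d lam, fun z hz => ?_⟩
    rw [cyl_char hsc]
    exact ⟨hz.1.trans hx.1, hz.2.trans hx.2⟩
  | univ => exact fun x _ => ⟨0, fun z _ => trivial⟩
  | inter U V hU hV ihU ihV =>
    intro x hx
    obtain ⟨N1, h1⟩ := ihU x hx.1
    obtain ⟨N2, h2⟩ := ihV x hx.2
    exact ⟨N1 ⊔ N2, fun z hz =>
      ⟨h1 (DSet_mono hsc le_sup_left hz), h2 (DSet_mono hsc le_sup_right hz)⟩⟩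
  | sUnion Sx hSx ih =>
    intro x hx
    obtain ⟨U, hU, hxU⟩ := hx
    obtain ⟨N, hN⟩ := ih U hU x hxU
    exact ⟨N, hN.trans (Set.subset_sUnion_of_mem hU)⟩

/-- The (open, shift-saturated) set of paths passing over the vertex `u`. -/
def ASet (u : Γ) : Set (InfPath S) := {z | ∃ p : Fin k → ℕ, Nonempty (z.vertex p ⟶ u)}

lemma ASet_open (hsc : ∀ X Y : Γ, Subsingleton (X ⟶ Y)) (u : Γ) :
    @IsOpen _ (pathTopology S) (ASet u) := by
  have key : ASet (S := S) u =
      ⋃₀ {C | (∃ (X Y : Γ) (lam : X ⟶ Y), C = cyl lam) ∧ C ⊆ ASet u} := by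
    ext z
    constructor
    · rintro ⟨p, ⟨f⟩⟩
      refine ⟨DSet z p, ⟨⟨_, _, z.edge 0 p zero_le, DSet_eq_cyl hsc z p⟩, ?_⟩,
        self_mem_DSet z p⟩
      rintro z' ⟨h0, hp⟩
      exact ⟨p, ⟨eqToHom hp ≫ f⟩⟩
    · rintro ⟨C, ⟨-, hsub⟩, hz⟩
      exact hsub hz
  rw [key]
  exact TopologicalSpace.GenerateOpen.sUnion _
    (fun C hC => TopologicalSpace.GenerateOpen.basic _ hC.1)

lemma ASet_mem_of_shiftEquiv {z z' : InfPath S} (h : ShiftEquiv z z') {u : Γ}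
    (hz : z ∈ ASet u) : z' ∈ ASet u := by
  show u ∈ VF z'
  rw [← VF_eq_of_shiftEquiv h]
  exact hz

lemma append_path (hsc : ∀ X Y : Γ, Subsingleton (X ⟶ Y)) (zh : InfPath S) {v : Γ}
    (f : zh.vertex 0 ⟶ v) :
    ∃ z : InfPath S, (∀ (m : Fin k → ℕ) (hm : m ≤ S.d f), z.vertex m = mid f hm) ∧
      ∀ n : Fin k → ℕ, z.vertex (n + S.d f) = zh.vertex n := by
  classical
  let E : ∀ n : Fin k → ℕ, zh.vertex n ⟶ zh.vertex 0 := fun n => zh.edge 0 n zero_le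
  have hdE : ∀ n, S.d (E n ≫ f) = n + S.d f := fun n => by
    rw [S.d_comp, d_edge0]
  have hle : ∀ n, n ≤ S.d (E n ≫ f) := fun n => by rw [hdE]; exact le_self_add
  let zv : (Fin k → ℕ) → Γ := fun n => mid (E n ≫ f) (hle n)
  have cross : ∀ {m n : Fin k → ℕ}, m ≤ n → ∀ (hm' : m ≤ S.d (E n ≫ f)),
      mid (E n ≫ f) hm' = zv m := fun {m n} hmn hm' =>
    mid_comp (hom_eq hsc (E n ≫ f) (zh.edge m n hmn ≫ (E m ≫ f))) (hle m) hm'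
  have hzv : ∀ m n : Fin k → ℕ, m ≤ n → ∃ e : zv n ⟶ zv m, S.d e = n - m := by
    intro m n hmn
    obtain ⟨e, he⟩ := mid_mid (E n ≫ f) hmn (hle n)
    exact ⟨e ≫ eqToHom (cross hmn _), by rw [S.d_comp, d_eqToHom, add_zero, he]⟩
  refine ⟨mkPath hsc zv hzv, ?_, ?_⟩
  · intro m hm
    show zv m = mid f hm
    exact mid_comp (rfl : E m ≫ f = E m ≫ f) hm (hle m)
  · intro n
    show zv (n + S.d f) = zh.vertex n
    have hdec : E (n + S.d f) ≫ f = zh.edge n (n + S.d f) le_self_add ≫ (E n ≫ f) :=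
      hom_eq hsc _ _
    have hnb : n + S.d f ≤ S.d (E n ≫ f) := le_of_eq (hdE n).symm
    rw [show zv (n + S.d f) = mid (E n ≫ f) hnb from mid_comp hdec hnb (hle _)]
    exact mid_top _ hnb (hdE n)

end Topology

end KGraphAux

open KGraphAux in
/-- for a singly connected row-finite source-free `k`-graph, the orbit
space `Γ^∞/≃` is Hausdorff if and only if any two distinct ultrafilters of `(Γ⁰, ≤)`
contain elements with no common upper bound. -/
theorem orbit_space_hausdorff_iff_ultrafilters (k : ℕ) (Γ : Type) [SmallCategory Γ]
    (S : KGraph k Γ) (hsc : ∀ X Y : Γ, Subsingleton (X ⟶ Y))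
    (hrf : RowFiniteSourceFree S) :
    @T2Space _ (orbitTopology S) ↔
      ∀ U V : Set Γ, IsVertexUltrafilter U → IsVertexUltrafilter V → U ≠ V →
        ∃ u ∈ U, ∃ v ∈ V, ¬ ∃ w : Γ, vle u w ∧ vle v w := by
  classical
  constructor
  · intro hT2 U V hU hV hUV
    obtain ⟨x, hx⟩ := exists_path_of_ultra hsc hrf hU
    obtain ⟨y, hy⟩ := exists_path_of_ultra hsc hrf hV
    have hxy : ¬ ShiftEquiv x y := fun h => hUV (by rw [← hx, ← hy]; exact VF_eq_of_shiftEquiv h)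
    have hq : (Quot.mk (ShiftEquiv (S := S)) x) ≠ Quot.mk _ y := fun h =>
      hxy ((shiftEquiv_equivalence hsc).eqvGen_iff.mp (Quot.eq.mp h))
    obtain ⟨OX, OY, hOX, hOY, hxO, hyO, hdisj⟩ := @t2_separation _ (orbitTopology S) hT2 _ _ hq
    have hPX : TopologicalSpace.GenerateOpen
        {U : Set (InfPath S) | ∃ (X Y : Γ) (lam : X ⟶ Y), U = cyl lam}
        (Quot.mk _ ⁻¹' OX) := (@isOpen_coinduced _ _ (pathTopology S) _ (Quot.mk _)).mp hOX
    have hPY : TopologicalSpace.GenerateOpen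
        {U : Set (InfPath S) | ∃ (X Y : Γ) (lam : X ⟶ Y), U = cyl lam}
        (Quot.mk _ ⁻¹' OY) := (@isOpen_coinduced _ _ (pathTopology S) _ (Quot.mk _)).mp hOY
    obtain ⟨N, hN⟩ := exists_DSet_subset hsc hPX x hxO
    obtain ⟨M, hM⟩ := exists_DSet_subset hsc hPY y hyO
    refine ⟨x.vertex N, by rw [← hx]; exact vertex_mem_VF x N,
      y.vertex M, by rw [← hy]; exact vertex_mem_VF y M, ?_⟩
    rintro ⟨w, hw1, hw2⟩
    obtain ⟨f0⟩ := (hw1 : Nonempty (w ⟶ x.vertex N))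
    obtain ⟨g0⟩ := (hw2 : Nonempty (w ⟶ y.vertex M))
    obtain ⟨zh, hzh0, -⟩ := chainPath hsc hrf (fun _ => w) (fun _ => ⟨𝟙 w⟩)
    set F : zh.vertex 0 ⟶ x.vertex 0 := eqToHom hzh0 ≫ f0 ≫ x.edge 0 N zero_le with hFdef
    set G : zh.vertex 0 ⟶ y.vertex 0 := eqToHom hzh0 ≫ g0 ≫ y.edge 0 M zero_le with hGdef
    obtain ⟨z, hz1, hz2⟩ := append_path hsc zh F
    obtain ⟨z', hz1', hz2'⟩ := append_path hsc zh G
    have hdF : S.d F = S.d f0 + N := by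
      rw [hFdef, S.d_comp, S.d_comp, d_eqToHom, d_edge0, zero_add]
    have hdG : S.d G = S.d g0 + M := by
      rw [hGdef, S.d_comp, S.d_comp, d_eqToHom, d_edge0, zero_add]
    have hzD : z ∈ DSet x N := by
      constructor
      · rw [hz1 0 zero_le]
        exact mid_zero _ _
      · have hN' : N ≤ S.d F := by rw [hdF]; exact le_add_self
        have hb : N ≤ S.d (x.edge 0 N zero_le) := le_of_eq (d_edge0 x N).symm
        rw [hz1 N hN',
          mid_comp (show F = (eqToHom hzh0 ≫ f0) ≫ x.edge 0 N zero_le by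
            rw [hFdef, Category.assoc]) hb hN']
        exact mid_top _ hb (d_edge0 x N)
    have hzD' : z' ∈ DSet y M := by
      constructor
      · rw [hz1' 0 zero_le]
        exact mid_zero _ _
      · have hM' : M ≤ S.d G := by rw [hdG]; exact le_add_self
        have hb : M ≤ S.d (y.edge 0 M zero_le) := le_of_eq (d_edge0 y M).symm
        rw [hz1' M hM',
          mid_comp (show G = (eqToHom hzh0 ≫ g0) ≫ y.edge 0 M zero_le by
            rw [hGdef, Category.assoc]) hb hM']
        exact mid_top _ hb (d_edge0 y M)
    have hZZ : ShiftEquiv z z' := by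
      refine ⟨S.d F, S.d G, path_ext hsc (funext fun n => ?_)⟩
      show z.vertex (n + S.d F) = z'.vertex (n + S.d G)
      rw [hz2 n, hz2' n]
    have h3 : Quot.mk (ShiftEquiv (S := S)) z = Quot.mk _ z' := Quot.sound hZZ
    exact Set.disjoint_left.mp hdisj (h3 ▸ hN hzD) (hM hzD')
  · intro hcond
    refine @T2Space.mk _ (orbitTopology S) ?_
    intro a b hab
    induction a using Quot.ind with | _ x =>
    induction b using Quot.ind with | _ y =>
    have hxy : ¬ ShiftEquiv x y := fun h => hab (Quot.sound h)
    have hVFneq : VF x ≠ VF y := fun h => hxy (shiftEquiv_of_VF_eq hsc h)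
    obtain ⟨u, hu, v, hv, hno⟩ := hcond _ _ (VF_ultra hsc x) (VF_ultra hsc y) hVFneq
    have hsatu : Quot.mk (ShiftEquiv (S := S)) ⁻¹' (Quot.mk _ '' ASet u) = ASet u := by
      ext z
      constructor
      · rintro ⟨z1, hz1, hq⟩
        exact ASet_mem_of_shiftEquiv
          ((shiftEquiv_equivalence hsc).eqvGen_iff.mp (Quot.eq.mp hq)) hz1
      · intro hz; exact ⟨z, hz, rfl⟩
    have hsatv : Quot.mk (ShiftEquiv (S := S)) ⁻¹' (Quot.mk _ '' ASet v) = ASet v := by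
      ext z
      constructor
      · rintro ⟨z1, hz1, hq⟩
        exact ASet_mem_of_shiftEquiv
          ((shiftEquiv_equivalence hsc).eqvGen_iff.mp (Quot.eq.mp hq)) hz1
      · intro hz; exact ⟨z, hz, rfl⟩
    refine ⟨Quot.mk _ '' ASet u, Quot.mk _ '' ASet v, ?_, ?_, ⟨x, hu, rfl⟩, ⟨y, hv, rfl⟩, ?_⟩
    · refine (@isOpen_coinduced _ _ (pathTopology S) _ (Quot.mk _)).mpr ?_
      rw [hsatu]
      exact ASet_open hsc u
    · refine (@isOpen_coinduced _ _ (pathTopology S) _ (Quot.mk _)).mpr ?_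
      rw [hsatv]
      exact ASet_open hsc v
    · rw [Set.disjoint_left]
      rintro q ⟨z1, hz1, hq1⟩ ⟨z2, hz2, hq2⟩
      have hzz : ShiftEquiv z1 z2 :=
        (shiftEquiv_equivalence hsc).eqvGen_iff.mp (Quot.eq.mp (hq1.trans hq2.symm))
      obtain ⟨p, ⟨fu⟩⟩ := ASet_mem_of_shiftEquiv hzz hz1
      obtain ⟨p', ⟨fv⟩⟩ := hz2
      exact hno ⟨z2.vertex (p ⊔ p'), ⟨z2.edge p (p ⊔ p') le_sup_left ≫ fu⟩,
        ⟨z2.edge p' (p ⊔ p') le_sup_right ≫ fv⟩⟩
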